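/- Let g ≠ 0, κ > 0, and Q, Q' ∈ ℝ³ with |Q|, |Q'| < 1 and Q ≠ Q'. Define α(Q,k) := −g (ρ(k)/|k|)/(1 − (k/|k|)·Q) on 0 < |k| ≤ κ with ρ(k) = (2π)^{−3/2}(2|k|)^{−1/2}. Then ∫_{0 < |k| ≤ κ} |α(Q,k) − α(Q',k)|² dk = +∞, i.e. the difference of the two coherent factors is not square integrable near k = 0. -/

import Mathlib

open MeasureTheory Real
open ENNReal

noncomputable def rhoNelson (k : EuclideanSpace ℝ (Fin 3)) : ℝ :=
  (2 * π) ^ (-(3 : ℝ) / 2) * (2 * ‖k‖) ^ (-(1 : ℝ) / 2)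

/-- The coherent factor α(Q,k) = −g (ρ(k)/|k|) / (1 − k̂·Q). -/
noncomputable def alphaIR (g : ℝ) (Q k : EuclideanSpace ℝ (Fin 3)) : ℝ :=
  -g * (rhoNelson k / ‖k‖) / (1 - (inner ℝ k Q : ℝ) / ‖k‖)

lemma alphaIR_zero (g : ℝ) (Q : EuclideanSpace ℝ (Fin 3)) : alphaIR g Q 0 = 0 := by
  simp [alphaIR]

lemma alphaIR_two_smul (g : ℝ) (Q k : EuclideanSpace ℝ (Fin 3)) :
    alphaIR g Q ((2:ℝ) • k) = ((2:ℝ) ^ (-(1:ℝ)/2) / 2) * alphaIR g Q k := by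
  rcases eq_or_ne k 0 with rfl | hk
  · simp [alphaIR_zero]
  have hr : (0:ℝ) < ‖k‖ := norm_pos_iff.2 hk
  have hnorm : ‖(2:ℝ) • k‖ = 2 * ‖k‖ := by
    rw [norm_smul]; norm_num
  have hrho : rhoNelson ((2:ℝ) • k) = (2:ℝ) ^ (-(1:ℝ)/2) * rhoNelson k := by
    unfold rhoNelson
    rw [hnorm]
    rw [show ((2:ℝ) * (2 * ‖k‖)) ^ (-(1:ℝ)/2)
        = (2:ℝ) ^ (-(1:ℝ)/2) * (2 * ‖k‖) ^ (-(1:ℝ)/2) from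
      Real.mul_rpow (by norm_num) (by positivity)]
    ring
  have hinner : (inner ℝ ((2:ℝ) • k) Q : ℝ) = 2 * (inner ℝ k Q : ℝ) := by
    rw [real_inner_smul_left]
  unfold alphaIR
  rw [hnorm, hrho, hinner]
  have hden : 2 * (inner ℝ k Q : ℝ) / (2 * ‖k‖) = (inner ℝ k Q : ℝ) / ‖k‖ := by
    rw [mul_div_mul_left _ _ (by norm_num : (2:ℝ) ≠ 0)]
  rw [hden]
  field_simp

lemma measurable_alphaIR (g : ℝ) (Q : EuclideanSpace ℝ (Fin 3)) :
    Measurable (alphaIR g Q) := by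
  unfold alphaIR rhoNelson
  measurability

/-- Key square-scaling: the squared rpow factor is 1/8. -/
lemma sq_factor : (((2:ℝ) ^ (-(1:ℝ)/2) / 2)) ^ 2 = 1 / 8 := by
  have h : ((2:ℝ) ^ (-(1:ℝ)/2)) ^ 2 = 1 / 2 := by
    rw [sq, ← Real.rpow_add (by norm_num : (0:ℝ) < 2)]
    norm_num
  rw [div_pow, h]
  norm_num


local notation "E3" => EuclideanSpace ℝ (Fin 3)

/-- Infrared catastrophe: for g ≠ 0 and Q ≠ Q' with |Q|,|Q'| < 1, the difference of the
coherent factors is not square integrable near k = 0: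
∫_{0 < |k| ≤ κ} |α(Q,k) − α(Q',k)|² dk = +∞. -/
theorem alphaIR_diff_not_square_integrable (g κ : ℝ) (Q Q' : EuclideanSpace ℝ (Fin 3))
    (hg : g ≠ 0) (hκ : 0 < κ) (hQ : ‖Q‖ < 1) (hQ' : ‖Q'‖ < 1) (hQQ' : Q ≠ Q') :
    (∫⁻ k in {k : EuclideanSpace ℝ (Fin 3) | 0 < ‖k‖ ∧ ‖k‖ ≤ κ},
        ENNReal.ofReal ((alphaIR g Q k - alphaIR g Q' k) ^ 2)) = ⊤ := by
  set F : E3 → ℝ≥0∞ := fun k => ENNReal.ofReal ((alphaIR g Q k - alphaIR g Q' k) ^ 2) with hFdef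
  have hF : Measurable F := by
    apply ENNReal.measurable_ofReal.comp
    exact ((measurable_alphaIR g Q).sub (measurable_alphaIR g Q')).pow_const 2
  -- scaling of F
  have hFsc : ∀ k : E3, F ((2:ℝ) • k) = F k / 8 := by
    intro k
    have : (alphaIR g Q ((2:ℝ) • k) - alphaIR g Q' ((2:ℝ) • k)) ^ 2
        = (alphaIR g Q k - alphaIR g Q' k) ^ 2 / 8 := by
      rw [alphaIR_two_smul, alphaIR_two_smul, ← mul_sub, mul_pow, sq_factor]
      ring
    rw [hFdef]; simp only [this]
    rw [ENNReal.ofReal_div_of_pos (by norm_num)]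
    norm_num
  -- measurable sets
  have hSmeas : ∀ c : ℝ, MeasurableSet {k : E3 | 0 < ‖k‖ ∧ ‖k‖ ≤ c} := by
    intro c
    exact (measurable_norm (measurableSet_Ioi)).inter (measurable_norm (measurableSet_Iic))
  -- scaling step
  have hstep : ∫⁻ k in {k : E3 | 0 < ‖k‖ ∧ ‖k‖ ≤ κ/2}, F k
      = ∫⁻ k in {k : E3 | 0 < ‖k‖ ∧ ‖k‖ ≤ κ}, F k := by
    set T : E3 → E3 := fun k => (2:ℝ) • k with hT
    have hTm : Measurable T := measurable_const_smul _
    have hmap : Measure.map T (volume : Measure E3)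
        = ENNReal.ofReal |(((2:ℝ) ^ Module.finrank ℝ E3))⁻¹| • (volume : Measure E3) :=
      Measure.map_addHaar_smul _ (by norm_num)
    have hfr : Module.finrank ℝ E3 = 3 := finrank_euclideanSpace_fin
    have key : ∫⁻ k, Set.indicator {k : E3 | 0 < ‖k‖ ∧ ‖k‖ ≤ κ} F (T k)
        = (8 : ℝ≥0∞)⁻¹ * ∫⁻ k in {k : E3 | 0 < ‖k‖ ∧ ‖k‖ ≤ κ}, F k := by
      rw [← lintegral_map (hF.indicator (hSmeas κ)) hTm, hmap, lintegral_smul_measure,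
        lintegral_indicator (hSmeas κ) _]
      congr 1
      rw [hfr]
      rw [show |(((2:ℝ) ^ (3:ℕ)))⁻¹| = (8:ℝ)⁻¹ by norm_num]
      rw [ENNReal.ofReal_inv_of_pos (by norm_num)]
      norm_num
    have hpt : ∀ k : E3, Set.indicator {k : E3 | 0 < ‖k‖ ∧ ‖k‖ ≤ κ/2} F k
        = 8 * Set.indicator {k : E3 | 0 < ‖k‖ ∧ ‖k‖ ≤ κ} F (T k) := by
      intro k
      have hTn : ‖T k‖ = 2 * ‖k‖ := by rw [hT]; simp [norm_smul]
      by_cases hk : 0 < ‖k‖ ∧ ‖k‖ ≤ κ/2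
      · have hk2 : 0 < ‖T k‖ ∧ ‖T k‖ ≤ κ := by
          rw [hTn]; constructor <;> [linarith [hk.1]; linarith [hk.2]]
        rw [Set.indicator_of_mem (show k ∈ {k : E3 | 0 < ‖k‖ ∧ ‖k‖ ≤ κ/2} from hk) F,
          Set.indicator_of_mem (show T k ∈ {k : E3 | 0 < ‖k‖ ∧ ‖k‖ ≤ κ} from hk2) F, hFsc]
        rw [ENNReal.mul_div_cancel' (by norm_num) (by norm_num)]
      · have hk2 : ¬ (0 < ‖T k‖ ∧ ‖T k‖ ≤ κ) := by
          rw [hTn]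
          intro ⟨h1, h2⟩
          exact hk ⟨by linarith, by linarith⟩
        rw [Set.indicator_of_notMem (show k ∉ {k : E3 | 0 < ‖k‖ ∧ ‖k‖ ≤ κ/2} from hk) F,
          Set.indicator_of_notMem (show T k ∉ {k : E3 | 0 < ‖k‖ ∧ ‖k‖ ≤ κ} from hk2) F,
          mul_zero]
    calc ∫⁻ k in {k : E3 | 0 < ‖k‖ ∧ ‖k‖ ≤ κ/2}, F k
        = ∫⁻ k, Set.indicator {k : E3 | 0 < ‖k‖ ∧ ‖k‖ ≤ κ/2} F k :=
          (lintegral_indicator (hSmeas (κ/2)) F).symm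
      _ = ∫⁻ k, 8 * Set.indicator {k : E3 | 0 < ‖k‖ ∧ ‖k‖ ≤ κ} F (T k) := lintegral_congr hpt
      _ = 8 * ∫⁻ k, Set.indicator {k : E3 | 0 < ‖k‖ ∧ ‖k‖ ≤ κ} F (T k) :=
          lintegral_const_mul 8 ((hF.indicator (hSmeas κ)).comp hTm)
      _ = 8 * (8⁻¹ * ∫⁻ k in {k : E3 | 0 < ‖k‖ ∧ ‖k‖ ≤ κ}, F k) := by rw [key]
      _ = ∫⁻ k in {k : E3 | 0 < ‖k‖ ∧ ‖k‖ ≤ κ}, F k := by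
          rw [← mul_assoc, ENNReal.mul_inv_cancel (by norm_num) (by norm_num), one_mul]
  -- main argument
  by_contra h
  set A : Set E3 := {k | κ/2 < ‖k‖ ∧ ‖k‖ ≤ κ} with hA
  have hAmeas : MeasurableSet A :=
    (measurable_norm measurableSet_Ioi).inter (measurable_norm measurableSet_Iic)
  have hunion : {k : E3 | 0 < ‖k‖ ∧ ‖k‖ ≤ κ}
      = {k : E3 | 0 < ‖k‖ ∧ ‖k‖ ≤ κ/2} ∪ A := by
    ext k
    simp only [hA, Set.mem_setOf_eq, Set.mem_union]
    constructor
    · rintro ⟨h1, h2⟩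
      rcases le_or_gt ‖k‖ (κ/2) with h3 | h3
      · exact Or.inl ⟨h1, h3⟩
      · exact Or.inr ⟨h3, h2⟩
    · rintro (⟨h1, h2⟩ | ⟨h1, h2⟩)
      · exact ⟨h1, by linarith⟩
      · exact ⟨by linarith, h2⟩
  have hdisj : Disjoint {k : E3 | 0 < ‖k‖ ∧ ‖k‖ ≤ κ/2} A := by
    rw [Set.disjoint_left]
    rintro k ⟨h1, h2⟩ ⟨h3, h4⟩
    linarith
  have hsum : ∫⁻ k in {k : E3 | 0 < ‖k‖ ∧ ‖k‖ ≤ κ}, F k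
      = (∫⁻ k in {k : E3 | 0 < ‖k‖ ∧ ‖k‖ ≤ κ}, F k) + ∫⁻ k in A, F k := by
    nth_rewrite 1 [hunion]
    rw [lintegral_union hAmeas hdisj, hstep]
  have hAzero : ∫⁻ k in A, F k = 0 := by
    have h0 : (∫⁻ k in {k : E3 | 0 < ‖k‖ ∧ ‖k‖ ≤ κ}, F k) + ∫⁻ k in A, F k
        = (∫⁻ k in {k : E3 | 0 < ‖k‖ ∧ ‖k‖ ≤ κ}, F k) + 0 := by
      rw [add_zero]; exact hsum.symm
    exact (ENNReal.add_right_inj h).mp h0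
  -- positivity on the annulus
  have hpos : 0 < ∫⁻ k in A, F k := by
    rw [setLIntegral_pos_iff hF]
    set v : E3 := Q - Q' with hv
    have hvne : v ≠ 0 := sub_ne_zero.2 hQQ'
    set H : Set E3 := {k | (inner ℝ k v : ℝ) = 0} with hH
    have hHnull : volume H = 0 := by
      have hker : H = (LinearMap.ker ((innerSL ℝ v : E3 →L[ℝ] ℝ) :
          E3 →ₗ[ℝ] ℝ) : Submodule ℝ E3) := by
        ext k
        simp only [hH, Set.mem_setOf_eq, SetLike.mem_coe, LinearMap.mem_ker,
          ContinuousLinearMap.coe_coe, innerSL_apply_apply]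
        rw [real_inner_comm]
      rw [hker]
      apply Measure.addHaar_submodule
      intro htop
      have hvmem : v ∈ LinearMap.ker ((innerSL ℝ v : E3 →L[ℝ] ℝ) : E3 →ₗ[ℝ] ℝ) := by
        rw [htop]; trivial
      rw [LinearMap.mem_ker] at hvmem
      simp only [ContinuousLinearMap.coe_coe, innerSL_apply_apply] at hvmem
      rw [real_inner_self_eq_norm_sq] at hvmem
      exact hvne (norm_eq_zero.mp (by nlinarith [norm_nonneg v]))
    set V : Set E3 := (fun k : E3 => ‖k‖) ⁻¹' Set.Ioo (κ/2) κ with hVdef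
    have hVopen : IsOpen V := isOpen_Ioo.preimage continuous_norm
    have hVne : V.Nonempty := by
      refine ⟨(3*κ/4) • EuclideanSpace.single (0 : Fin 3) (1:ℝ), ?_⟩
      simp only [hVdef, Set.mem_preimage, Set.mem_Ioo, norm_smul,
        EuclideanSpace.norm_single, norm_one, mul_one, Real.norm_eq_abs]
      rw [abs_of_pos (by linarith)]
      constructor <;> linarith
    have hFpos : ∀ k ∈ V \ H, F k ≠ 0 := by
      rintro k ⟨hkV, hkH⟩
      simp only [hVdef, Set.mem_preimage, Set.mem_Ioo] at hkV
      obtain ⟨hk1, hk2⟩ := hkV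
      have hr : (0:ℝ) < ‖k‖ := by linarith
      have hrne : ‖k‖ ≠ 0 := hr.ne'
      have hρ : 0 < rhoNelson k :=
        mul_pos (Real.rpow_pos_of_pos (by positivity) _)
          (Real.rpow_pos_of_pos (by linarith) _)
      have hx : 0 < rhoNelson k / ‖k‖ := div_pos hρ hr
      have ha1 : (inner ℝ k Q : ℝ) / ‖k‖ < 1 := by
        rw [div_lt_one hr]
        have h1 := real_inner_le_norm k Q
        nlinarith
      have hb1 : (inner ℝ k Q' : ℝ) / ‖k‖ < 1 := by
        rw [div_lt_one hr]
        have h1 := real_inner_le_norm k Q'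
        nlinarith
      have hDa : (0:ℝ) < 1 - (inner ℝ k Q : ℝ) / ‖k‖ := by linarith
      have hDb : (0:ℝ) < 1 - (inner ℝ k Q' : ℝ) / ‖k‖ := by linarith
      have hne : (inner ℝ k Q : ℝ) ≠ (inner ℝ k Q' : ℝ) := by
        intro hEq
        apply hkH
        show (inner ℝ k v : ℝ) = 0
        rw [hv, inner_sub_right]
        simpa using sub_eq_zero.2 hEq
      simp only [hFdef, ne_eq, ENNReal.ofReal_eq_zero, not_le]
      have hd : alphaIR g Q k ≠ alphaIR g Q' k := by
        intro hEq
        unfold alphaIR at hEq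
        rw [div_eq_div_iff hDa.ne' hDb.ne'] at hEq
        have hN : -g * (rhoNelson k / ‖k‖) ≠ 0 :=
          mul_ne_zero (neg_ne_zero.2 hg) hx.ne'
        have hD : 1 - (inner ℝ k Q' : ℝ) / ‖k‖ = 1 - (inner ℝ k Q : ℝ) / ‖k‖ :=
          mul_left_cancel₀ hN hEq
        have : (inner ℝ k Q : ℝ) / ‖k‖ = (inner ℝ k Q' : ℝ) / ‖k‖ := by linarith
        field_simp [hrne] at this
        exact hne this
      exact lt_of_le_of_ne (sq_nonneg _)
        (Ne.symm (pow_ne_zero 2 (sub_ne_zero.2 hd)))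
    have hsub : V \ H ⊆ Function.support F ∩ A := by
      rintro k ⟨hkV, hkH⟩
      have hkV' := hkV
      simp only [hVdef, Set.mem_preimage, Set.mem_Ioo] at hkV'
      exact ⟨hFpos k ⟨hkV, hkH⟩, ⟨hkV'.1, hkV'.2.le⟩⟩
    calc (0:ℝ≥0∞) < volume (V \ H) := by
          rw [measure_diff_null hHnull]
          exact hVopen.measure_pos volume hVne
      _ ≤ volume (Function.support F ∩ A) := measure_mono hsub
  exact hpos.ne' hAzero
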